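/- Let φ : S^1 → R be a function and let v1, v2 be vectors in R^{1,2} such that for all η in the closed unit disk, ⟨(1,η), v1⟩_{1,2} ≤ φ^-(η) and ⟨(1,η), v2⟩_{1,2} ≤ φ^-(η), where φ^- is the convex lower envelope of φ, and suppose each inequality attains equality at some point of the open disk. Then there exists η in the open unit disk with ⟨(1,η), v1⟩_{1,2} = ⟨(1,η), v2⟩_{1,2}; in particular, if v1 ≠ v2, then v1 - v2 is not timelike or null in a way preventing intersection, i.e., the two affine support planes intersect over the open disk. -/
import Mathlib


/-- The Minkowski bilinear form of signature `(-,+,+)` on `ℝ × ℝ × ℝ`. -/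
def mink (x y : ℝ × ℝ × ℝ) : ℝ := -(x.1 * y.1) + x.2.1 * y.2.1 + x.2.2 * y.2.2

/-- The convex lower envelope `φ⁻` of a function `φ` on the unit circle:
`φ⁻(η) = sup { a(η) : a affine on ℝ², a ≤ φ on S¹ }`. -/
noncomputable def lowerEnv (φ : ℝ × ℝ → ℝ) (η : ℝ × ℝ) : ℝ :=
  sSup {y : ℝ | ∃ a : (ℝ × ℝ) →ᵃ[ℝ] ℝ,
    (∀ z : ℝ × ℝ, z.1 ^ 2 + z.2 ^ 2 = 1 → a z ≤ φ z) ∧ y = a η}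

/-- Two support planes of the epigraph of `φ⁻` touching the graph over the open disk must
intersect over the open disk. -/
theorem support_planes_intersect (φ : ℝ × ℝ → ℝ) (v₁ v₂ : ℝ × ℝ × ℝ)
    (h₁ : ∀ η : ℝ × ℝ, η.1 ^ 2 + η.2 ^ 2 ≤ 1 → mink (1, η.1, η.2) v₁ ≤ lowerEnv φ η)
    (h₂ : ∀ η : ℝ × ℝ, η.1 ^ 2 + η.2 ^ 2 ≤ 1 → mink (1, η.1, η.2) v₂ ≤ lowerEnv φ η)
    (he₁ : ∃ η : ℝ × ℝ, η.1 ^ 2 + η.2 ^ 2 < 1 ∧ mink (1, η.1, η.2) v₁ = lowerEnv φ η)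
    (he₂ : ∃ η : ℝ × ℝ, η.1 ^ 2 + η.2 ^ 2 < 1 ∧ mink (1, η.1, η.2) v₂ = lowerEnv φ η) :
    ∃ η : ℝ × ℝ, η.1 ^ 2 + η.2 ^ 2 < 1 ∧
      mink (1, η.1, η.2) v₁ = mink (1, η.1, η.2) v₂ := by
  obtain ⟨p, hp, hp1⟩ := he₁
  obtain ⟨q, hq, hq2⟩ := he₂
  -- f₁ ≥ f₂ at p, f₂ ≥ f₁ at q
  have hA : mink (1, p.1, p.2) v₂ ≤ mink (1, p.1, p.2) v₁ := by
    rw [hp1]; exact h₂ p hp.le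
  have hB : mink (1, q.1, q.2) v₁ ≤ mink (1, q.1, q.2) v₂ := by
    rw [hq2]; exact h₁ q hq.le
  -- the path
  set c : ℝ → ℝ × ℝ := fun t => ((1 - t) * p.1 + t * q.1, (1 - t) * p.2 + t * q.2) with hc
  set g : ℝ → ℝ := fun t =>
    mink (1, (c t).1, (c t).2) v₁ - mink (1, (c t).1, (c t).2) v₂ with hg
  have hcont : ContinuousOn g (Set.Icc (0:ℝ) 1) := by
    apply Continuous.continuousOn
    simp only [hg, hc, mink]
    continuity
  have hg0 : 0 ≤ g 0 := by
    simp only [hg, hc]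
    simp only [sub_nonneg]
    simpa using hA
  have hg1 : g 1 ≤ 0 := by
    simp only [hg, hc]
    simp only [sub_nonpos]
    simpa using hB
  have h01 : (0:ℝ) ≤ 1 := zero_le_one
  have := intermediate_value_Icc' h01 hcont (Set.mem_Icc.mpr ⟨hg1, hg0⟩)
  obtain ⟨t, ht, hgt⟩ := this
  obtain ⟨ht0, ht1⟩ := Set.mem_Icc.mp ht
  refine ⟨c t, ?_, by linarith [sub_eq_zero.mp hgt, hgt]⟩
  · have hs : (0:ℝ) ≤ 1 - t := by linarith
    simp only [hc]
    have key : ((1-t)*p.1+t*q.1)^2 + ((1-t)*p.2+t*q.2)^2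
        = (1-t)*(p.1^2+p.2^2) + t*(q.1^2+q.2^2)
          - (1-t)*t*((p.1-q.1)^2+(p.2-q.2)^2) := by ring
    have hA' : (1-t)*(p.1^2+p.2^2) ≤ (1-t)*1 := mul_le_mul_of_nonneg_left hp.le hs
    have hB' : t*(q.1^2+q.2^2) ≤ t*1 := mul_le_mul_of_nonneg_left hq.le ht0
    have hnn : 0 ≤ (1-t)*t*((p.1-q.1)^2+(p.2-q.2)^2) :=
      mul_nonneg (mul_nonneg hs ht0) (by positivity)
    rcases eq_or_lt_of_le ht0 with h | h
    · have : t = 0 := h.symm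
      subst this
      simpa using hp
    · have hB'' : t*(q.1^2+q.2^2) < t*1 := by
        exact mul_lt_mul_of_pos_left hq h
      rw [key]; linarith
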